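/- arXiv:cs/0306106 — 2 statements merged into one kernel-verified Lean document; each statement's English description precedes it below -/
import Mathlib

section
/- In a countably additive Popper space, for any conditioning event V₀, the infimum over V' in the ∼-equivalence class of V₀ of μ(V₀ | V₀ ∪ V') is strictly positive. -/
/-- A countably additive Popper space over `(W, F)`: `F` is a σ-algebra of subsets of `W`,
`F'` ⊆ `F` does not contain `∅`, is closed under supersets in `F`, satisfies the regularity
condition that `μ(V | U) ≠ 0` with `U ∈ F'` implies `V ∩ U ∈ F'`, and `μ` satisfies CP1–CP3
and is countably additive in its first argument. -/
structure Popper {W : Type*} (F F' : Set (Set W)) (μ : Set W → Set W → ℝ) : Prop where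
  univ_mem : Set.univ ∈ F
  compl_mem : ∀ ⦃U⦄, U ∈ F → Uᶜ ∈ F
  iUnion_mem : ∀ s : ℕ → Set W, (∀ n, s n ∈ F) → (⋃ n, s n) ∈ F
  subset : F' ⊆ F
  empty_not_mem : (∅ : Set W) ∉ F'
  superset_closed : ∀ ⦃U V⦄, U ∈ F' → U ⊆ V → V ∈ F → V ∈ F'
  cond_closed : ∀ ⦃U V⦄, U ∈ F' → V ∈ F → μ V U ≠ 0 → V ∩ U ∈ F'
  nonneg : ∀ V ∈ F, ∀ U ∈ F', 0 ≤ μ V U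
  le_one : ∀ V ∈ F, ∀ U ∈ F', μ V U ≤ 1
  cp1 : ∀ U ∈ F', μ U U = 1
  cp2 : ∀ V₁ ∈ F, ∀ V₂ ∈ F, ∀ U ∈ F', Disjoint V₁ V₂ → μ (V₁ ∪ V₂) U = μ V₁ U + μ V₂ U
  cp3 : ∀ V ∈ F, ∀ X ∈ F', ∀ U ∈ F', V ⊆ X → X ⊆ U → μ V U = μ V X * μ X U
  countably_additive : ∀ V : ℕ → Set W, (∀ n, V n ∈ F) → Pairwise (Function.onFun Disjoint V) →
    ∀ U ∈ F', HasSum (fun n => μ (V n) U) (μ (⋃ n, V n) U)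

/-- The relation `U ≤ V` defined by `μ(U | U ∪ V) > 0`. -/
def leRel {W : Type*} (μ : Set W → Set W → ℝ) (U V : Set W) : Prop :=
  0 < μ U (U ∪ V)

/-- `U ∼ V` iff `U ≤ V` and `V ≤ U`. -/
def simRel {W : Type*} (μ : Set W → Set W → ℝ) (U V : Set W) : Prop :=
  leRel μ U V ∧ leRel μ V U

section Aux

variable {W : Type*} {F F' : Set (Set W)} {μ : Set W → Set W → ℝ}

lemma Popper.union_mem (h : Popper F F' μ) {A B : Set W} (hA : A ∈ F) (hB : B ∈ F) :
    A ∪ B ∈ F := by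
  have key := h.iUnion_mem (fun n => if n = 0 then A else B)
    (by intro n; split <;> assumption)
  have : (⋃ n, if n = 0 then A else B) = A ∪ B := by
    ext x
    simp only [Set.mem_iUnion, Set.mem_union]
    constructor
    · rintro ⟨n, hn⟩
      by_cases hn0 : n = 0
      · left; simpa [hn0] using hn
      · right; simpa [hn0] using hn
    · rintro (hx | hx)
      · exact ⟨0, by simpa using hx⟩
      · exact ⟨1, by simpa using hx⟩
  rwa [this] at key

lemma Popper.inter_mem (h : Popper F F' μ) {A B : Set W} (hA : A ∈ F) (hB : B ∈ F) :
    A ∩ B ∈ F := by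
  have : A ∩ B = (Aᶜ ∪ Bᶜ)ᶜ := by simp [Set.compl_union]
  rw [this]
  exact h.compl_mem (h.union_mem (h.compl_mem hA) (h.compl_mem hB))

lemma Popper.diff_mem (h : Popper F F' μ) {A B : Set W} (hA : A ∈ F) (hB : B ∈ F) :
    A \ B ∈ F := by
  have : A \ B = A ∩ Bᶜ := rfl
  rw [this]
  exact h.inter_mem hA (h.compl_mem hB)

lemma Popper.partialSups_mem (h : Popper F F' μ) {t : ℕ → Set W} (ht : ∀ n, t n ∈ F) (n : ℕ) :
    partialSups t n ∈ F := by
  induction n with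
  | zero => simpa using ht 0
  | succ n ih =>
    rw [partialSups_add_one]
    exact h.union_mem ih (ht (n + 1))

lemma Popper.disjointed_mem (h : Popper F F' μ) {t : ℕ → Set W} (ht : ∀ n, t n ∈ F) (n : ℕ) :
    disjointed t n ∈ F := by
  cases n with
  | zero => simpa [disjointed_zero] using ht 0
  | succ n =>
    rw [disjointed_add_one]
    exact h.diff_mem (ht (n + 1)) (h.partialSups_mem ht n)

end Aux

/-- In a countably additive Popper space, for any conditioning event `V₀`, the infimum over
`V'` in the `∼`-equivalence class of `V₀` of `μ(V₀ | V₀ ∪ V')` is strictly positive. -/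
theorem stmt4 {W : Type*} {F F' : Set (Set W)} {μ : Set W → Set W → ℝ}
    (h : Popper F F' μ) (V₀ : Set W) (hV₀ : V₀ ∈ F') :
    0 < sInf {x : ℝ | ∃ V' ∈ F', simRel μ V' V₀ ∧ x = μ V₀ (V₀ ∪ V')} := by
  set S := {x : ℝ | ∃ V' ∈ F', simRel μ V' V₀ ∧ x = μ V₀ (V₀ ∪ V')} with hS
  have hV₀F : V₀ ∈ F := h.subset hV₀
  have hne : S.Nonempty := by
    refine ⟨μ V₀ (V₀ ∪ V₀), V₀, hV₀, ⟨?_, ?_⟩, rfl⟩ <;>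
    · show (0 : ℝ) < μ V₀ (V₀ ∪ V₀)
      rw [Set.union_self]
      rw [h.cp1 V₀ hV₀]
      norm_num
  have hbdd : BddBelow S := by
    refine ⟨0, ?_⟩
    rintro x ⟨V', hV', _, rfl⟩
    exact h.nonneg V₀ hV₀F (V₀ ∪ V') (h.superset_closed hV₀ Set.subset_union_left
      (h.union_mem hV₀F (h.subset hV')))
  by_contra hcon
  push_neg at hcon
  -- choose a sequence of witnesses with small values
  have hchoose : ∀ n : ℕ, ∃ V' : Set W, V' ∈ F' ∧ simRel μ V' V₀ ∧
      μ V₀ (V₀ ∪ V') < 1 / (n + 1) := by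
    intro n
    have hlt : sInf S < 1 / (n + 1 : ℝ) := lt_of_le_of_lt hcon (by positivity)
    obtain ⟨x, hxS, hx⟩ := exists_lt_of_csInf_lt hne hlt
    obtain ⟨V', hV', hsim, rfl⟩ := hxS
    exact ⟨V', hV', hsim, hx⟩
  choose V hVF' hsim hlt using hchoose
  -- the big union
  set t : ℕ → Set W := fun n => Nat.casesOn n V₀ V with ht
  have htF : ∀ n, t n ∈ F := by
    intro n
    cases n with
    | zero => exact hV₀F
    | succ m => exact h.subset (hVF' m)
  set U : Set W := ⋃ n, t n with hU
  have hUF : U ∈ F := h.iUnion_mem t htF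
  have hV₀U : V₀ ⊆ U := Set.subset_iUnion t 0
  have hUF' : U ∈ F' := h.superset_closed hV₀ hV₀U hUF
  have hXmem : ∀ m : ℕ, V₀ ∪ V m ∈ F' := fun m =>
    h.superset_closed hV₀ Set.subset_union_left (h.union_mem hV₀F (h.subset (hVF' m)))
  have hXsubU : ∀ m : ℕ, V₀ ∪ V m ⊆ U := by
    intro m
    apply Set.union_subset hV₀U
    exact Set.subset_iUnion t (m + 1)
  -- μ(V₀ | U) = 0
  have hzero : μ V₀ U = 0 := by
    have hle : ∀ n : ℕ, μ V₀ U < 1 / (n + 1 : ℝ) := by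
      intro n
      have h3 := h.cp3 V₀ hV₀F (V₀ ∪ V n) (hXmem n) U hUF'
        Set.subset_union_left (hXsubU n)
      have h1 : μ (V₀ ∪ V n) U ≤ 1 := h.le_one _ (h.union_mem hV₀F (h.subset (hVF' n))) U hUF'
      have h0 : 0 ≤ μ (V₀ ∪ V n) U := h.nonneg _ (h.union_mem hV₀F (h.subset (hVF' n))) U hUF'
      have h0' : 0 ≤ μ V₀ (V₀ ∪ V n) := h.nonneg V₀ hV₀F _ (hXmem n)
      calc μ V₀ U = μ V₀ (V₀ ∪ V n) * μ (V₀ ∪ V n) U := h3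
        _ ≤ μ V₀ (V₀ ∪ V n) * 1 := by nlinarith
        _ = μ V₀ (V₀ ∪ V n) := mul_one _
        _ < 1 / (n + 1 : ℝ) := hlt n
    have hge : 0 ≤ μ V₀ U := h.nonneg V₀ hV₀F U hUF'
    by_contra hne0
    have hpos : 0 < μ V₀ U := lt_of_le_of_ne hge (Ne.symm hne0)
    obtain ⟨n, hn⟩ := exists_nat_one_div_lt hpos
    exact absurd (hle n) (not_lt.mpr hn.le)
  -- countable additivity over the disjointed sequence
  have hsum : HasSum (fun n => μ (disjointed t n) U) (μ (⋃ n, disjointed t n) U) :=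
    h.countably_additive (disjointed t) (h.disjointed_mem htF) (disjoint_disjointed t) U hUF'
  rw [iUnion_disjointed] at hsum
  rw [← hU, h.cp1 U hUF'] at hsum
  -- some term is positive
  have hex : ∃ n, μ (disjointed t n) U ≠ 0 := by
    by_contra hall
    push_neg at hall
    have : HasSum (fun n => μ (disjointed t n) U) 0 := by
      simpa [hall] using (hasSum_zero : HasSum (fun _ : ℕ => (0:ℝ)) 0)
    have := hsum.unique this
    norm_num at this
  obtain ⟨n, hn⟩ := hex
  have hnpos : 0 < μ (disjointed t n) U :=
    lt_of_le_of_ne (h.nonneg _ (h.disjointed_mem htF n) U hUF') (Ne.symm hn)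
  cases n with
  | zero =>
    rw [disjointed_zero] at hnpos
    have : t 0 = V₀ := rfl
    rw [this, hzero] at hnpos
    exact lt_irrefl _ hnpos
  | succ m =>
    -- disjointed t (m+1) ⊆ V m ⊆ V₀ ∪ V m
    have hsub : disjointed t (m + 1) ⊆ V₀ ∪ V m := by
      refine (disjointed_subset t (m + 1)).trans ?_
      exact Set.subset_union_right
    have h3 := h.cp3 (disjointed t (m + 1)) (h.disjointed_mem htF (m + 1))
      (V₀ ∪ V m) (hXmem m) U hUF' hsub (hXsubU m)
    rw [h3] at hnpos
    have hXpos : 0 < μ (V₀ ∪ V m) U := by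
      rcases lt_or_eq_of_le (h.nonneg _ (h.union_mem hV₀F (h.subset (hVF' m))) U hUF') with hp | hp
      · exact hp
      · rw [← hp, mul_zero] at hnpos; exact absurd hnpos (lt_irrefl 0)
    have h4 := h.cp3 V₀ hV₀F (V₀ ∪ V m) (hXmem m) U hUF' Set.subset_union_left (hXsubU m)
    have hV₀pos : 0 < μ V₀ (V₀ ∪ V m) := (hsim m).2
    have : 0 < μ V₀ U := by rw [h4]; positivity
    rw [hzero] at this
    exact lt_irrefl _ this
end

section
/- In a countably additive Popper space, every ∼-equivalence class [V] of conditioning events contains a maximal element V*: there exists V* ∈ [V] such that μ(V* | V' ∪ V*) = 1 for all V' ∈ [V]. -/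
section Helpers

variable {W : Type*} {F F' : Set (Set W)} {μ : Set W → Set W → ℝ}

/-- The σ-algebra `F` as a `MeasurableSpace`. -/
def Popper.ms (h : Popper F F' μ) : MeasurableSpace W where
  MeasurableSet' s := s ∈ F
  measurableSet_empty := by simpa using h.compl_mem h.univ_mem
  measurableSet_compl := fun _ hs => h.compl_mem hs
  measurableSet_iUnion := h.iUnion_mem

theorem Popper.mono (h : Popper F F' μ) {A B U : Set W} (hA : A ∈ F) (hB : B ∈ F)
    (hAB : A ⊆ B) (hU : U ∈ F') : μ A U ≤ μ B U := by
  letI := h.ms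
  have hBA : B \ A ∈ F := ((show MeasurableSet B from hB).diff (show MeasurableSet A from hA))
  have : μ B U = μ A U + μ (B \ A) U := by
    rw [← h.cp2 A hA (B \ A) hBA U hU disjoint_sdiff_self_right,
      Set.union_diff_cancel hAB]
  linarith [h.nonneg (B \ A) hBA U hU]

theorem Popper.subadd (h : Popper F F' μ) {A B U : Set W} (hA : A ∈ F) (hB : B ∈ F)
    (hU : U ∈ F') : μ (A ∪ B) U ≤ μ A U + μ B U := by
  letI := h.ms
  have hBA : B \ A ∈ F := ((show MeasurableSet B from hB).diff (show MeasurableSet A from hA))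
  have h1 : μ (A ∪ B) U = μ A U + μ (B \ A) U := by
    rw [← h.cp2 A hA (B \ A) hBA U hU disjoint_sdiff_self_right, Set.union_diff_self]
  have h2 : μ (B \ A) U ≤ μ B U := h.mono hBA hB Set.diff_subset hU
  linarith

theorem Popper.pos_union (h : Popper F F' μ) {V A B : Set W} (hV : V ∈ F')
    (hA : A ∈ F) (hB : B ∈ F) (h1 : 0 < μ V (V ∪ A)) (h2 : 0 < μ V (V ∪ B)) :
    0 < μ V (V ∪ A ∪ B) := by
  letI := h.ms
  have hVF : V ∈ F := h.subset hV
  have hVA : V ∪ A ∈ F :=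
    ((show MeasurableSet V from hVF).union (show MeasurableSet A from hA))
  have hVB : V ∪ B ∈ F :=
    ((show MeasurableSet V from hVF).union (show MeasurableSet B from hB))
  have hU : V ∪ A ∪ B ∈ F :=
    ((show MeasurableSet (V ∪ A) from hVA).union (show MeasurableSet B from hB))
  have hVA' : V ∪ A ∈ F' := h.superset_closed hV Set.subset_union_left hVA
  have hVB' : V ∪ B ∈ F' := h.superset_closed hV Set.subset_union_left hVB
  have hU' : V ∪ A ∪ B ∈ F' :=
    h.superset_closed hV (Set.subset_union_left.trans Set.subset_union_left) hU
  rcases lt_or_eq_of_le (h.nonneg V hVF _ hU') with hpos | heq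
  · exact hpos
  exfalso
  have e1 : μ V (V ∪ A ∪ B) = μ V (V ∪ A) * μ (V ∪ A) (V ∪ A ∪ B) :=
    h.cp3 V hVF (V ∪ A) hVA' _ hU' Set.subset_union_left Set.subset_union_left
  have e2 : μ V (V ∪ A ∪ B) = μ V (V ∪ B) * μ (V ∪ B) (V ∪ A ∪ B) :=
    h.cp3 V hVF (V ∪ B) hVB' _ hU' Set.subset_union_left
      (Set.union_subset (Set.subset_union_left.trans Set.subset_union_left)
        Set.subset_union_right)
  have z1 : μ (V ∪ A) (V ∪ A ∪ B) = 0 := by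
    rcases mul_eq_zero.1 (e1 ▸ heq.symm) with hc | hc
    · exact absurd hc (ne_of_gt h1)
    · exact hc
  have z2 : μ (V ∪ B) (V ∪ A ∪ B) = 0 := by
    rcases mul_eq_zero.1 (e2 ▸ heq.symm) with hc | hc
    · exact absurd hc (ne_of_gt h2)
    · exact hc
  have hcover : (V ∪ A) ∪ (V ∪ B) = V ∪ A ∪ B := by
    ext x; simp only [Set.mem_union]; tauto
  have hone : μ (V ∪ A ∪ B) (V ∪ A ∪ B) = 1 := h.cp1 _ hU'
  have := h.subadd hVA hVB hU'
  rw [hcover, hone, z1, z2] at this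
  linarith

theorem Set.accumulate_nat_succ {α : Type*} (s : ℕ → Set α) (n : ℕ) :
    Set.accumulate s (n + 1) = Set.accumulate s n ∪ s (n + 1) := by
  ext x
  simp only [Set.mem_accumulate, Set.mem_union, Nat.le_add_one_iff]
  constructor
  · rintro ⟨y, hy | rfl, hx⟩
    · exact Or.inl ⟨y, hy, hx⟩
    · exact Or.inr hx
  · rintro (⟨y, hy, hx⟩ | hx)
    · exact ⟨y, Or.inl hy, hx⟩
    · exact ⟨n + 1, Or.inr rfl, hx⟩

end Helpers
/-- In a countably additive Popper space, every `∼`-equivalence class `[V]` of conditioning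
events contains a maximal element `V*`: there is `V* ∈ [V]` with `μ(V* | V' ∪ V*) = 1`
for all `V' ∈ [V]`. -/
theorem stmt5 {W : Type*} {F F' : Set (Set W)} {μ : Set W → Set W → ℝ}
    (h : Popper F F' μ) (V : Set W) (hV : V ∈ F') :
    ∃ Vs ∈ F', simRel μ Vs V ∧
      ∀ V' ∈ F', simRel μ V' V → μ Vs (V' ∪ Vs) = 1 := by
  classical
  letI := h.ms
  have hVF : V ∈ F := h.subset hV
  -- the set of values μ(V | V ∪ V') over the equivalence class of V
  set S : Set ℝ := {x | ∃ V' ∈ F', simRel μ V' V ∧ x = μ V (V ∪ V')} with hSdef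
  have hVV : simRel μ V V := by
    constructor <;> · show (0:ℝ) < μ V (V ∪ V); rw [Set.union_self, h.cp1 V hV]; norm_num
  have hSne : S.Nonempty := ⟨μ V (V ∪ V), V, hV, hVV, rfl⟩
  have hSbdd : BddBelow S := by
    refine ⟨0, ?_⟩
    rintro x ⟨V', hV', _, rfl⟩
    have hV'F : V' ∈ F := h.subset hV'
    have hUF : V ∪ V' ∈ F :=
      ((show MeasurableSet V from hVF).union (show MeasurableSet V' from hV'F))
    exact h.nonneg V hVF _ (h.superset_closed hV Set.subset_union_left hUF)
  set β := sInf S with hβdef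
  -- choose a minimizing sequence
  have hexists : ∀ n : ℕ, ∃ V', V' ∈ F' ∧ simRel μ V' V ∧ μ V (V ∪ V') < β + 1 / (n + 1) := by
    intro n
    have hε : (0:ℝ) < 1 / (n + 1) := by positivity
    obtain ⟨x, ⟨V', hV', hsim, rfl⟩, hlt⟩ := Real.lt_sInf_add_pos hSne hε
    exact ⟨V', hV', hsim, hlt⟩
  choose f hf1 hf2 hf3 using hexists
  set g : ℕ → Set W := fun n => V ∪ f n with hgdef
  have hgm : ∀ n, MeasurableSet (g n) :=
    fun n => (show MeasurableSet V from hVF).union (show MeasurableSet (f n) from h.subset (hf1 n))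
  set Wn : ℕ → Set W := fun n => Set.accumulate g n with hWdef
  have hW0 : Wn 0 = g 0 := by
    simp only [hWdef]
    ext x; simp [Set.mem_accumulate, Nat.le_zero]
  have hWsucc : ∀ k, Wn (k + 1) = Wn k ∪ g (k + 1) := by
    intro k; simp only [hWdef]; exact Set.accumulate_nat_succ g k
  have hWm : ∀ n, MeasurableSet (Wn n) := by
    intro n
    induction n with
    | zero => rw [hW0]; exact hgm 0
    | succ k ih => rw [hWsucc k]; exact ih.union (hgm (k + 1))
  have hVsubW : ∀ n, V ⊆ Wn n := fun n =>
    Set.subset_union_left.trans (Set.subset_accumulate (s := g) (x := n))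
  have hWF' : ∀ n, Wn n ∈ F' := fun n => h.superset_closed hV (hVsubW n) (hWm n)
  set Vs : Set W := ⋃ n, g n with hVsdef
  have hVsm : MeasurableSet Vs := MeasurableSet.iUnion hgm
  have hVsubVs : V ⊆ Vs := Set.subset_union_left.trans (Set.subset_iUnion g 0)
  have hVs' : Vs ∈ F' := h.superset_closed hV hVsubVs hVsm
  have hWsubVs : ∀ n, Wn n ⊆ Vs := fun n => Set.accumulate_subset_iUnion n
  -- μ(V | Wn n) > 0 by induction
  have hVW : ∀ n, 0 < μ V (Wn n) := by
    intro n
    induction n with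
    | zero => rw [hW0]; exact (hf2 0).2
    | succ k ih =>
      have e1 : V ∪ Wn k ∪ f (k + 1) = Wn (k + 1) := by
        rw [hWsucc k, Set.union_eq_self_of_subset_left (hVsubW k)]
        show Wn k ∪ f (k + 1) = Wn k ∪ (V ∪ f (k + 1))
        rw [← Set.union_assoc, Set.union_comm (Wn k) V,
          Set.union_eq_self_of_subset_left (hVsubW k)]
      have h1 : 0 < μ V (V ∪ Wn k) := by
        rw [Set.union_eq_self_of_subset_left (hVsubW k)]; exact ih
      have h2 : 0 < μ V (V ∪ f (k + 1)) := (hf2 (k + 1)).2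
      have := h.pos_union hV (hWm k) (show MeasurableSet (f (k + 1)) from h.subset (hf1 (k + 1))) h1 h2
      rwa [e1] at this
  -- countable additivity to get 0 < μ(V | Vs)
  have hiU : (⋃ n, disjointed Wn n) = Vs := by
    rw [iUnion_disjointed]
    exact Set.iUnion_accumulate
  have hsum : HasSum (fun n => μ (disjointed Wn n) Vs) 1 := by
    have := h.countably_additive (disjointed Wn)
      (fun n => MeasurableSet.disjointed hWm n) (disjoint_disjointed Wn) Vs hVs'
    rwa [hiU, h.cp1 Vs hVs'] at this
  have hDm : ∃ m, 0 < μ (disjointed Wn m) Vs := by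
    by_contra hc
    push_neg at hc
    have hz : (fun n => μ (disjointed Wn n) Vs) = fun _ => 0 := by
      funext n
      exact le_antisymm (hc n) (h.nonneg _ (MeasurableSet.disjointed hWm n) Vs hVs')
    rw [hz] at hsum
    exact one_ne_zero (hsum.unique hasSum_zero)
  obtain ⟨m, hm⟩ := hDm
  have hWmpos : 0 < μ (Wn m) Vs :=
    lt_of_lt_of_le hm (h.mono (MeasurableSet.disjointed hWm m) (hWm m)
      (disjointed_subset Wn m) hVs')
  have hVVs : 0 < μ V Vs := by
    have := h.cp3 V hVF (Wn m) (hWF' m) Vs hVs' (hVsubW m) (hWsubVs m)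
    rw [this]
    exact mul_pos (hVW m) hWmpos
  -- μ(V | Vs) ≤ β
  have hVVs_le : μ V Vs ≤ β := by
    by_contra hlt
    push_neg at hlt
    obtain ⟨n, hn⟩ := exists_nat_one_div_lt (sub_pos.2 hlt)
    have hgsub : g n ⊆ Vs := Set.subset_iUnion g n
    have hg' : g n ∈ F' := h.superset_closed hV Set.subset_union_left (hgm n)
    have e : μ V Vs = μ V (g n) * μ (g n) Vs :=
      h.cp3 V hVF (g n) hg' Vs hVs' Set.subset_union_left hgsub
    have hle1 : μ (g n) Vs ≤ 1 := h.le_one (g n) (hgm n) Vs hVs'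
    have hge0 : 0 ≤ μ V (g n) := h.nonneg V hVF (g n) hg'
    have : μ V Vs ≤ μ V (g n) := by
      rw [e]; exact mul_le_of_le_one_right hge0 hle1
    have h3 := hf3 n
    have : μ V Vs < β + 1 / (n + 1) := lt_of_le_of_lt this h3
    have hn' : (1:ℝ) / (n + 1) < μ V Vs - β := hn
    linarith
  -- β ≤ μ(V | Vs)
  have hsimVs : simRel μ Vs V := by
    constructor
    · show (0:ℝ) < μ Vs (Vs ∪ V)
      rw [Set.union_eq_self_of_subset_right hVsubVs, h.cp1 Vs hVs']; norm_num
    · show (0:ℝ) < μ V (V ∪ Vs)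
      rwa [Set.union_eq_self_of_subset_left hVsubVs]
  have hβ_le : β ≤ μ V Vs := by
    have hmem : μ V Vs ∈ S := by
      refine ⟨Vs, hVs', hsimVs, ?_⟩
      rw [Set.union_eq_self_of_subset_left hVsubVs]
    exact csInf_le hSbdd hmem
  have hβeq : μ V Vs = β := le_antisymm hVVs_le hβ_le
  have hβpos : 0 < β := hβeq ▸ hVVs
  -- conclusion
  refine ⟨Vs, hVs', hsimVs, ?_⟩
  intro V' hV' hsim'
  have hV'F : V' ∈ F := h.subset hV'
  have hUm : MeasurableSet (V' ∪ Vs) := (show MeasurableSet V' from hV'F).union hVsm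
  have hU' : V' ∪ Vs ∈ F' := h.superset_closed hVs' Set.subset_union_right hUm
  have hVsubU : V ⊆ V' ∪ Vs := hVsubVs.trans Set.subset_union_right
  have hVU : 0 < μ V (V' ∪ Vs) := by
    have h1 : 0 < μ V (V ∪ V') := hsim'.2
    have h2 : 0 < μ V (V ∪ Vs) := by
      rwa [Set.union_eq_self_of_subset_left hVsubVs]
    have := h.pos_union hV (show MeasurableSet V' from hV'F) hVsm h1 h2
    have e : V ∪ V' ∪ Vs = V' ∪ Vs := by
      rw [Set.union_assoc, Set.union_comm V', ← Set.union_assoc,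
        Set.union_eq_self_of_subset_left hVsubVs, Set.union_comm]
    rwa [e] at this
  have hmemU : μ V (V' ∪ Vs) ∈ S := by
    refine ⟨V' ∪ Vs, hU', ?_, ?_⟩
    · constructor
      · show (0:ℝ) < μ (V' ∪ Vs) ((V' ∪ Vs) ∪ V)
        rw [Set.union_eq_self_of_subset_right hVsubU, h.cp1 _ hU']; norm_num
      · show (0:ℝ) < μ V (V ∪ (V' ∪ Vs))
        rwa [Set.union_eq_self_of_subset_left hVsubU]
    · rw [Set.union_eq_self_of_subset_left hVsubU]
  have hβleU : β ≤ μ V (V' ∪ Vs) := csInf_le hSbdd hmemU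
  have hfact : μ V (V' ∪ Vs) = β * μ Vs (V' ∪ Vs) := by
    rw [← hβeq]
    exact h.cp3 V hVF Vs hVs' (V' ∪ Vs) hU' hVsubVs Set.subset_union_right
  have hle1 : μ Vs (V' ∪ Vs) ≤ 1 := h.le_one Vs hVsm (V' ∪ Vs) hU'
  have hge1 : 1 ≤ μ Vs (V' ∪ Vs) := by
    rw [hfact] at hβleU
    exact (le_mul_iff_one_le_right hβpos).1 hβleU
  linarith
end
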